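/- Let E be a Banach space and A a subset of E. The following statements are equivalent: (1) the closure of A in the weak topology σ(E,E') is weakly compact; (2) every sequence of elements of A has a subsequence that converges in the weak topology to an element of E; (3) every sequence of elements of A has a cluster point in E with respect to the weak topology. -/

import Mathlib

open Filter Topology Set

universe u v

/-- A set is relatively sequentially compact if every sequence in it has a subsequence
converging to a point of the ambient space. -/
def RelSeqCompact {E : Type u} [TopologicalSpace E] (K : Set E) : Prop :=
  ∀ u : ℕ → E, (∀ n, u n ∈ K) →
    ∃ (x : E) (φ : ℕ → ℕ), StrictMono φ ∧ Tendsto (u ∘ φ) atTop (𝓝 x)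

/-- A set is relatively countably compact if every sequence in it has a cluster point
in the ambient space. -/
def RelCountablyCompact {E : Type u} [TopologicalSpace E] (K : Set E) : Prop :=
  ∀ u : ℕ → E, (∀ n, u n ∈ K) → ∃ x : E, MapClusterPt x atTop u

section EberleinAux

open NormedSpace Metric

local notation "Dual" => StrongDual

set_option linter.unusedSectionVars false
set_option maxHeartbeats 2000000

theorem norming_finset {W : Type*} [NormedAddCommGroup W] [NormedSpace ℝ W] [CompleteSpace W]
    (s : Finset (Dual ℝ W)) :
    ∃ T : Finset W, (∀ f ∈ T, ‖f‖ ≤ 1) ∧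
      ∀ y ∈ Submodule.span ℝ (s : Set (Dual ℝ W)), ∃ f ∈ T, ‖y‖ ≤ 2 * ‖y f‖ := by
  set V := Submodule.span ℝ (s : Set (Dual ℝ W)) with hV
  have hcs : IsCompact (sphere (0 : V) 1) := isCompact_sphere 0 1
  have hcover : sphere (0 : V) 1 ⊆ ⋃ v ∈ sphere (0 : V) 1, ball v (1/4) := fun v hv =>
    mem_biUnion hv (mem_ball_self (by norm_num))
  obtain ⟨t, hts, htfin, htcov⟩ := hcs.elim_finite_subcover_image
    (fun v _ => isOpen_ball) hcover
  have hsel : ∀ v : V, v ∈ t → ∃ f : W, ‖f‖ ≤ 1 ∧ 3/4 < ‖(v : Dual ℝ W) f‖ := by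
    intro v hv
    have hnv : ‖(v : Dual ℝ W)‖ = 1 := by
      have := hts hv
      simpa [Metric.mem_sphere, dist_eq_norm] using (mem_sphere_zero_iff_norm (E := V)).1 this
    obtain ⟨x, hx1, hx2⟩ := ContinuousLinearMap.exists_lt_apply_of_lt_opNorm
      (f := (v : Dual ℝ W)) (r := 3/4) (by rw [hnv]; norm_num)
    exact ⟨x, hx1.le, hx2⟩
  choose F hF1 hF2 using hsel
  classical
  refine ⟨insert 0 (htfin.toFinset.attach.image fun v =>
    F v.1 (htfin.mem_toFinset.1 v.2)), ?_, ?_⟩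
  · intro f hf
    rcases Finset.mem_insert.1 hf with rfl | hf
    · simp
    · obtain ⟨v, _, rfl⟩ := Finset.mem_image.1 hf
      exact hF1 _ _
  · intro y hy
    rcases eq_or_ne y 0 with rfl | hy0
    · exact ⟨0, Finset.mem_insert_self _ _, by simp⟩
    · set yV : V := ⟨y, hy⟩ with hyV
      have hny : ‖yV‖ = ‖y‖ := rfl
      have hy0' : ‖y‖ ≠ 0 := norm_ne_zero_iff.2 hy0
      set v0 : V := ‖y‖⁻¹ • yV with hv0
      have hv0mem : v0 ∈ sphere (0 : V) 1 := by
        simp only [mem_sphere, dist_zero_right (E := V)]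
        show ‖(‖y‖⁻¹ : ℝ) • (yV : Dual ℝ W)‖ = 1
        rw [norm_smul, norm_inv, norm_norm, inv_mul_cancel₀ hy0']
      obtain ⟨v, hvt, hvball⟩ := mem_iUnion₂.1 (htcov hv0mem)
      set f := F v hvt with hf
      refine ⟨f, Finset.mem_insert_of_mem (Finset.mem_image.2
        ⟨⟨v, htfin.mem_toFinset.2 hvt⟩, Finset.mem_attach _ _, rfl⟩), ?_⟩
      have hdist : ‖(v0 : Dual ℝ W) - (v : Dual ℝ W)‖ < 1/4 := by
        have := (mem_ball_iff_norm (E := V)).1 hvball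
        exact this
      have happrox : ‖((v0 : Dual ℝ W) - (v : Dual ℝ W)) f‖ ≤ 1/4 := by
        calc ‖((v0 : Dual ℝ W) - (v : Dual ℝ W)) f‖
            ≤ ‖(v0 : Dual ℝ W) - (v : Dual ℝ W)‖ * ‖f‖ :=
              ContinuousLinearMap.le_opNorm _ _
          _ ≤ (1/4) * 1 := by
              apply mul_le_mul hdist.le (hF1 v hvt) (norm_nonneg _) (by norm_num)
          _ = 1/4 := by norm_num
      have hkey : 1/2 ≤ ‖(v0 : Dual ℝ W) f‖ := by
        have h34 := hF2 v hvt
        have h5 := norm_sub_norm_le ((v : Dual ℝ W) f) ((v0 : Dual ℝ W) f)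
        rw [norm_sub_rev] at h5
        have h2 : ((v0 : Dual ℝ W) - (v : Dual ℝ W)) f
            = (v0 : Dual ℝ W) f - (v : Dual ℝ W) f := rfl
        rw [h2] at happrox
        linarith
      have hv0f : (v0 : Dual ℝ W) f = ‖y‖⁻¹ * y f := by
        simp [hv0, hyV]
      rw [hv0f] at hkey
      have : 1/2 ≤ ‖y‖⁻¹ * ‖y f‖ := by
        rwa [norm_mul, norm_inv, norm_norm] at hkey
      have hpos : (0:ℝ) < ‖y‖ := (norm_nonneg y).lt_of_ne (Ne.symm hy0')
      have hinv : ‖y‖ * ‖y‖⁻¹ = 1 := mul_inv_cancel₀ hy0'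
      nlinarith [norm_nonneg (y f)]

variable {E : Type u} [NormedAddCommGroup E] [NormedSpace ℝ E] [CompleteSpace E]

instance : ContinuousAdd (Dual ℝ (Dual ℝ E)) :=
  @IsTopologicalAddGroup.toContinuousAdd _ _ _ ContinuousLinearMap.topologicalAddGroup

noncomputable def JW : WeakSpace ℝ E → WeakDual ℝ (Dual ℝ E) :=
  fun x => NormedSpace.inclusionInDoubleDual ℝ E x

theorem JW_cont : Continuous (JW (E := E)) := by
  apply WeakDual.continuous_of_continuous_eval
  intro f
  exact WeakBilin.eval_continuous _ f

theorem JW_inducing : IsInducing (JW (E := E)) := by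
  constructor
  show (WeakBilin.instTopologicalSpace _ : TopologicalSpace (WeakSpace ℝ E)) = _
  rw [WeakBilin.instTopologicalSpace]
  show _ = TopologicalSpace.induced _ (WeakBilin.instTopologicalSpace _)
  rw [WeakBilin.instTopologicalSpace]
  refine Eq.trans ?_ induced_compose.symm
  rfl

theorem weak_eval_continuous (f : Dual ℝ E) :
    Continuous fun z : WeakSpace ℝ E => f ((toWeakSpace ℝ E).symm z) :=
  WeakBilin.eval_continuous _ f

/-- separation of a point from a closed subspace -/
theorem exists_dual_annihilator {x : E} {M : Submodule ℝ E} (hM : IsClosed (M : Set E))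
    (hx : x ∉ M) : ∃ f : Dual ℝ E, (∀ y ∈ M, f y = 0) ∧ f x ≠ 0 := by
  obtain ⟨f, u, hfM, hfx⟩ := geometric_hahn_banach_closed_point M.convex hM hx
  have hvanish : ∀ y ∈ M, f y = 0 := by
    intro y hy
    by_contra hfy
    have hmem : ∀ t : ℝ, t • y ∈ M := fun t => M.smul_mem t hy
    have h1 := hfM _ (hmem ((u + 1) / f y))
    rw [map_smul] at h1
    simp only [smul_eq_mul] at h1
    rw [div_mul_cancel₀ _ hfy] at h1
    have h0 := hfM _ M.zero_mem
    rw [map_zero] at h0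
    linarith
  have h0 := hfM _ M.zero_mem
  rw [map_zero] at h0
  exact ⟨f, hvanish, by intro h; rw [h] at hfx; linarith⟩

theorem rcc_bounded {A : Set (WeakSpace ℝ E)} (h : RelCountablyCompact A) :
    ∃ r : ℝ, ∀ a ∈ A, ‖(toWeakSpace ℝ E).symm a‖ ≤ r := by
  have step1 : ∀ f : Dual ℝ E, ∃ C, ∀ a ∈ A, ‖f ((toWeakSpace ℝ E).symm a)‖ ≤ C := by
    intro f
    by_contra hC
    push_neg at hC
    choose u hu hnorm using fun n : ℕ => hC n
    obtain ⟨x, hx⟩ := h u hu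
    have hfx := hx.continuousAt_comp (weak_eval_continuous f).continuousAt
    set c := f ((toWeakSpace ℝ E).symm x) with hc
    have hfreq := (mapClusterPt_iff_frequently.1 hfx) (Metric.ball c 1) (Metric.ball_mem_nhds _ one_pos)
    obtain ⟨n, hn1, hn2⟩ := (hfreq.and_eventually (eventually_ge_atTop ⌈‖c‖ + 1⌉₊)).exists
    have h1 : ‖f ((toWeakSpace ℝ E).symm (u n))‖ < ‖c‖ + 1 := by
      have hb : ‖f ((toWeakSpace ℝ E).symm (u n)) - c‖ < 1 := mem_ball_iff_norm.1 hn1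
      calc ‖f ((toWeakSpace ℝ E).symm (u n))‖
          = ‖(f ((toWeakSpace ℝ E).symm (u n)) - c) + c‖ := by ring_nf
        _ ≤ ‖f ((toWeakSpace ℝ E).symm (u n)) - c‖ + ‖c‖ := norm_add_le _ _
        _ < 1 + ‖c‖ := by linarith
        _ = ‖c‖ + 1 := by ring
    have h2 : (n : ℝ) < ‖c‖ + 1 := lt_trans (hnorm n) h1
    have h3 : (⌈‖c‖ + 1⌉₊ : ℝ) ≤ (n : ℝ) := Nat.cast_le.2 hn2
    have h4 : ‖c‖ + 1 ≤ (⌈‖c‖ + 1⌉₊ : ℝ) := Nat.le_ceil _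
    linarith
  set g : A → Dual ℝ E →L[ℝ] ℝ :=
    fun a => inclusionInDoubleDual ℝ E ((toWeakSpace ℝ E).symm a.1) with hg
  have hpt : ∀ f : Dual ℝ E, ∃ C, ∀ a : A, ‖g a f‖ ≤ C := by
    intro f
    obtain ⟨C, hC⟩ := step1 f
    exact ⟨C, fun a => hC a.1 a.2⟩
  obtain ⟨C', hC'⟩ := banach_steinhaus hpt
  refine ⟨C', fun a ha => ?_⟩
  have := hC' ⟨a, ha⟩
  rwa [show g ⟨a, ha⟩ = inclusionInDoubleDualLi ℝ ((toWeakSpace ℝ E).symm a) from rfl,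
    (inclusionInDoubleDualLi ℝ).norm_map] at this

theorem mem_range_JW {A : Set (WeakSpace ℝ E)} (hA : RelCountablyCompact A)
    (x : WeakDual ℝ (Dual ℝ E)) (hx : x ∈ closure (JW '' A)) :
    x ∈ Set.range (JW (E := E)) := by
  classical
  set xd : Dual ℝ (Dual ℝ E) := x with hxd
  set Jm : WeakSpace ℝ E → Dual ℝ (Dual ℝ E) :=
    fun a => inclusionInDoubleDual ℝ E ((toWeakSpace ℝ E).symm a) with hJm
  -- selection of approximating elements of A
  have hsel0 : ∀ T : Finset (Dual ℝ E), ∀ n : ℕ, ∃ a ∈ A,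
      ∀ f ∈ T, ‖x f - f ((toWeakSpace ℝ E).symm a)‖ < 1 / (n + 1) := by
    intro T n
    have hε : (0:ℝ) < 1 / (n + 1) := by positivity
    have hUopen : IsOpen {z : WeakDual ℝ (Dual ℝ E) | ∀ f ∈ T, ‖z f - x f‖ < 1 / (n+1)} := by
      have heq : {z : WeakDual ℝ (Dual ℝ E) | ∀ f ∈ T, ‖z f - x f‖ < 1 / (n+1)}
          = ⋂ f ∈ T, {z : WeakDual ℝ (Dual ℝ E) | ‖z f - x f‖ < 1 / (n+1)} := by
        ext z; simp only [Set.mem_setOf_eq, Set.mem_iInter]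
      rw [heq]
      refine isOpen_biInter_finset fun f _ => ?_
      have : {z : WeakDual ℝ (Dual ℝ E) | ‖z f - x f‖ < 1 / (n+1)}
          = (fun z : WeakDual ℝ (Dual ℝ E) => z f) ⁻¹' Metric.ball (x f) (1/(n+1)) := by
        ext z; simp only [Set.mem_setOf_eq, Set.mem_preimage, mem_ball_iff_norm]
      rw [this]
      exact isOpen_ball.preimage (WeakDual.eval_continuous f)
    have hxU : x ∈ {z : WeakDual ℝ (Dual ℝ E) | ∀ f ∈ T, ‖z f - x f‖ < 1 / (n+1)} := by
      intro f _
      simpa using hε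
    obtain ⟨z, hz1, hz2⟩ := mem_closure_iff.1 hx _ hUopen hxU
    obtain ⟨a, ha, rfl⟩ := hz2
    refine ⟨a, ha, fun f hf => ?_⟩
    have := hz1 f hf
    rwa [show (JW a) f = f ((toWeakSpace ℝ E).symm a) from rfl, norm_sub_rev] at this
  choose sel hselA hselP using hsel0
  choose Φ hΦ1 hΦ2 using fun s : Finset (Dual ℝ (Dual ℝ E)) =>
    norming_finset (W := Dual ℝ E) s
  -- the recursive construction
  let step : ℕ → Finset (Dual ℝ E) × Finset (Dual ℝ (Dual ℝ E)) := fun n =>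
    Nat.rec (Φ {xd}, {xd})
      (fun m p => (p.1 ∪ Φ (insert (Jm (sel p.1 m)) p.2), insert (Jm (sel p.1 m)) p.2)) n
  set a : ℕ → WeakSpace ℝ E := fun n => sel (step n).1 n with ha
  have hstep_succ1 : ∀ n, (step (n+1)).1 = (step n).1 ∪ Φ (insert (Jm (a n)) (step n).2) := by
    intro n; rfl
  have hstep_succ2 : ∀ n, (step (n+1)).2 = insert (Jm (a n)) (step n).2 := by
    intro n; rfl
  -- monotonicity
  have hmono1 : ∀ n m, n ≤ m → (step n).1 ⊆ (step m).1 := by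
    intro n m hnm
    induction hnm with
    | refl => exact Finset.Subset.refl _
    | step h ih => exact ih.trans (by rw [hstep_succ1]; exact Finset.subset_union_left)
  have hmono2 : ∀ n m, n ≤ m → (step n).2 ⊆ (step m).2 := by
    intro n m hnm
    induction hnm with
    | refl => exact Finset.Subset.refl _
    | step h ih => exact ih.trans (by rw [hstep_succ2]; exact Finset.subset_insert _ _)
  have hnorm1 : ∀ n, ∀ f ∈ (step n).1, ‖f‖ ≤ 1 := by
    intro n
    induction n with
    | zero => exact fun f hf => hΦ1 _ f hf
    | succ m ih =>
      intro f hf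
      rw [hstep_succ1] at hf
      rcases Finset.mem_union.1 hf with hf | hf
      · exact ih f hf
      · exact hΦ1 _ f hf
  have hstep2 : ∀ n, (step n).2
      = insert xd (Finset.image (fun i => Jm (a i)) (Finset.range n)) := by
    intro n
    induction n with
    | zero =>
      show ({xd} : Finset (Dual ℝ (Dual ℝ E))) = _
      simp
    | succ m ih =>
      rw [hstep_succ2, ih, Finset.range_add_one, Finset.image_insert, Finset.insert_comm]
  have hxd_mem : ∀ n, xd ∈ (step n).2 := by
    intro n; rw [hstep2]; exact Finset.mem_insert_self _ _
  -- norming property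
  have hnormspan : ∀ n, ∀ y ∈ Submodule.span ℝ ((step n).2 : Set (Dual ℝ (Dual ℝ E))),
      ∃ f ∈ (step (n+1)).1, ‖y‖ ≤ 2 * ‖y f‖ := by
    intro n y hy
    have hy' : y ∈ Submodule.span ℝ (((step (n+1)).2 : Finset _) : Set (Dual ℝ (Dual ℝ E))) :=
      Submodule.span_mono (by rw [hstep_succ2]; exact fun z hz => Finset.mem_insert_of_mem hz) hy
    obtain ⟨f, hf1, hf2⟩ := hΦ2 ((step (n+1)).2) y hy'
    refine ⟨f, ?_, hf2⟩
    rw [hstep_succ1 n, ← hstep_succ2 n]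
    exact Finset.mem_union_right _ hf1
  -- approximation property
  have happrox : ∀ n, ∀ f ∈ (step n).1,
      ‖x f - f ((toWeakSpace ℝ E).symm (a n))‖ < 1 / (n + 1) :=
    fun n f hf => hselP (step n).1 n f hf
  -- cluster point
  obtain ⟨w, hw⟩ := hA a fun n => hselA (step n).1 n
  set wE : E := (toWeakSpace ℝ E).symm w with hwE
  set aE : ℕ → E := fun n => (toWeakSpace ℝ E).symm (a n) with haE
  -- w is in the norm-closed span of the (a n)
  set M : Submodule ℝ E := (Submodule.span ℝ (Set.range aE)).topologicalClosure with hM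
  have hwM : wE ∈ M := by
    by_contra hwM
    have hMc : IsClosed (M : Set E) :=
      (Submodule.span ℝ (Set.range aE)).isClosed_topologicalClosure
    obtain ⟨f, hf0, hfw⟩ := exists_dual_annihilator hMc hwM
    have hclust := hw.continuousAt_comp (weak_eval_continuous f).continuousAt
    have hfreq := (mapClusterPt_iff_frequently.1 hclust) (Metric.ball (f wE) (‖f wE‖))
      (Metric.ball_mem_nhds _ (by simpa [norm_pos_iff] using hfw))
    obtain ⟨n, hn⟩ := hfreq.exists
    have hfa : f (aE n) = 0 := hf0 _ ((Submodule.span ℝ (Set.range aE)).le_topologicalClosure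
      (Submodule.subset_span ⟨n, rfl⟩))
    have : ‖f (aE n) - f wE‖ < ‖f wE‖ := mem_ball_iff_norm.1 hn
    rw [hfa, zero_sub, norm_neg] at this
    exact lt_irrefl _ this
  -- the difference z
  set z : Dual ℝ (Dual ℝ E) := xd - Jm w with hz
  -- z annihilated by all functionals in the construction
  have hzf : ∀ m, ∀ f ∈ (step m).1, z f = 0 := by
    intro m f hf
    have hcont := hw.continuousAt_comp (weak_eval_continuous f).continuousAt
    have hzero : ∀ ε : ℝ, 0 < ε → ‖z f‖ < 2 * ε := by
      intro ε hε
      obtain ⟨N, hN⟩ := exists_nat_gt (1/ε)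
      have hev : ∀ᶠ n in atTop, max m N ≤ n := eventually_ge_atTop _
      have hfreq := (mapClusterPt_iff_frequently.1 hcont) (Metric.ball (f wE) ε)
        (Metric.ball_mem_nhds _ hε)
      obtain ⟨n, hn1, hn2⟩ := (hfreq.and_eventually hev).exists
      have hfm : f ∈ (step n).1 := hmono1 m n (le_trans (le_max_left _ _) hn2) hf
      have h1 : ‖x f - f (aE n)‖ < 1 / (n + 1) := happrox n f hfm
      have h2 : ‖f (aE n) - f wE‖ < ε := mem_ball_iff_norm.1 hn1
      have h3 : (1:ℝ) / (n+1) < ε := by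
        rw [div_lt_iff₀ (by positivity)]
        have hNn : (N:ℝ) ≤ n := Nat.cast_le.2 (le_trans (le_max_right _ _) hn2)
        have : 1/ε < (n:ℝ) + 1 := by linarith
        rw [div_lt_iff₀ hε] at this
        linarith [mul_comm ε ((n:ℝ)+1)]
      have hzeval : z f = (x f - f (aE n)) + (f (aE n) - f wE) := by
        have : z f = x f - f wE := rfl
        rw [this]; ring
      calc ‖z f‖ ≤ ‖x f - f (aE n)‖ + ‖f (aE n) - f wE‖ := by
            rw [hzeval]; exact norm_add_le _ _
        _ < ε + ε := by linarith
        _ = 2 * ε := by ring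
    by_contra hzf0
    have hpos : 0 < ‖z f‖ := norm_pos_iff.2 hzf0
    have := hzero (‖z f‖ / 4) (by positivity)
    linarith
  -- z is in the closure of the span of the construction
  set N : Submodule ℝ (Dual ℝ (Dual ℝ E)) :=
    Submodule.span ℝ (insert xd (Set.range fun n => Jm (a n))) with hN
  have hzN : z ∈ N.topologicalClosure := by
    have hxdN : xd ∈ N := Submodule.subset_span (Set.mem_insert _ _)
    have hJmw : Jm w ∈ N.topologicalClosure := by
      have hcont : Continuous (inclusionInDoubleDual ℝ E) := (inclusionInDoubleDual ℝ E).cont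
      have h1 : Submodule.span ℝ (Set.range aE)
          ≤ Submodule.comap (inclusionInDoubleDual ℝ E).toLinearMap N := by
        rw [Submodule.span_le]
        rintro _ ⟨i, rfl⟩
        exact Submodule.subset_span (Set.mem_insert_of_mem _ ⟨i, rfl⟩)
      have himg : inclusionInDoubleDual ℝ E '' (Submodule.span ℝ (Set.range aE) : Set E)
          ⊆ (N : Set (Dual ℝ (Dual ℝ E))) := by
        rintro _ ⟨y, hy, rfl⟩
        exact h1 hy
      have hwM' : inclusionInDoubleDual ℝ E wE
          ∈ closure (inclusionInDoubleDual ℝ E '' (Submodule.span ℝ (Set.range aE) : Set E)) := by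
        have := image_closure_subset_closure_image (f := (inclusionInDoubleDual ℝ E)) hcont
          (s := (Submodule.span ℝ (Set.range aE) : Set E))
        exact this ⟨wE, hwM, rfl⟩
      have : Jm w = inclusionInDoubleDual ℝ E wE := rfl
      rw [this]
      exact closure_mono himg hwM'
    convert N.topologicalClosure.add_mem (N.le_topologicalClosure hxdN)
      (N.topologicalClosure.smul_mem (-1 : ℝ) hJmw) using 1
    ext f; simp [hz, sub_eq_add_neg]
  -- every element of N is in the span of some stage
  have hstage : ∀ y ∈ N, ∃ n, y ∈ Submodule.span ℝ ((step n).2 : Set (Dual ℝ (Dual ℝ E))) := by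
    intro y hy
    induction hy using Submodule.span_induction with
    | mem v hv =>
      rcases hv with rfl | ⟨i, rfl⟩
      · exact ⟨0, Submodule.subset_span (by simpa using hxd_mem 0)⟩
      · refine ⟨i+1, Submodule.subset_span ?_⟩
        have hmem : Jm (a i) ∈ (step (i+1)).2 := by
          rw [hstep_succ2]; exact Finset.mem_insert_self _ _
        exact Finset.mem_coe.2 hmem
    | zero => exact ⟨0, Submodule.zero_mem _⟩
    | add v₁ v₂ h₁ h₂ ih₁ ih₂ =>
      obtain ⟨n₁, hn₁⟩ := ih₁
      obtain ⟨n₂, hn₂⟩ := ih₂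
      refine ⟨max n₁ n₂, Submodule.add_mem _ ?_ ?_⟩
      · exact Submodule.span_mono (Finset.coe_subset.2 (hmono2 _ _ (le_max_left _ _))) hn₁
      · exact Submodule.span_mono (Finset.coe_subset.2 (hmono2 _ _ (le_max_right _ _))) hn₂
    | smul c v hv ih =>
      obtain ⟨n, hn⟩ := ih
      exact ⟨n, Submodule.smul_mem _ c hn⟩
  -- conclude z = 0
  have hz0 : z = 0 := by
    have hnorm : ∀ ε : ℝ, 0 < ε → ‖z‖ ≤ 3 * ε := by
      intro ε hε
      have hzcl : (z : Dual ℝ (Dual ℝ E)) ∈ closure (N : Set (Dual ℝ (Dual ℝ E))) := hzN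
      obtain ⟨y, hyN, hyz⟩ := (Metric.mem_closure_iff (α := Dual ℝ (Dual ℝ E))).1 hzcl ε hε
      obtain ⟨n, hn⟩ := hstage y hyN
      obtain ⟨f, hf1, hf2⟩ := hnormspan n y hn
      have hzf0 : z f = 0 := hzf (n+1) f hf1
      have hfn : ‖f‖ ≤ 1 := hnorm1 (n+1) f hf1
      have hyf : ‖y f‖ ≤ ε := by
        have : y f = (y - z) f + z f := by rw [ContinuousLinearMap.sub_apply]; ring
        rw [this, hzf0, add_zero]
        calc ‖(y - z) f‖ ≤ ‖y - z‖ * ‖f‖ := ContinuousLinearMap.le_opNorm _ _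
          _ ≤ ε * 1 := mul_le_mul (by rw [← dist_eq_norm (E := Dual ℝ (Dual ℝ E)), dist_comm]; exact hyz.le) hfn
              (norm_nonneg _) hε.le
          _ = ε := mul_one _
      calc ‖z‖ ≤ ‖z - y‖ + ‖y‖ := by
            have := norm_add_le (z - y) y; rwa [sub_add_cancel (G := Dual ℝ (Dual ℝ E))] at this
        _ ≤ ε + 2 * ‖y f‖ := by
            have hd : ‖z - y‖ ≤ ε := by rw [← dist_eq_norm (E := Dual ℝ (Dual ℝ E))]; exact hyz.le
            linarith
        _ ≤ ε + 2 * ε := by linarith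
        _ = 3 * ε := by ring
    have : ‖z‖ ≤ 0 := by
      by_contra hc
      push_neg at hc
      have := hnorm (‖z‖ / 4) (by linarith)
      linarith
    exact (ContinuousLinearMap.opNorm_zero_iff z).1 (le_antisymm this (norm_nonneg z))
  refine ⟨w, ?_⟩
  have : xd = Jm w := by
    have := (sub_eq_zero (G := Dual ℝ (Dual ℝ E))).1 hz0
    exact this
  exact this.symm

theorem rcc_isCompact_closure {A : Set (WeakSpace ℝ E)} (h : RelCountablyCompact A) :
    IsCompact (closure A) := by
  obtain ⟨r, hr⟩ := rcc_bounded h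
  have hball : JW '' A ⊆ WeakDual.toStrongDual ⁻¹' Metric.closedBall (0 : Dual ℝ (Dual ℝ E)) r := by
    rintro _ ⟨a, ha, rfl⟩
    have : ‖inclusionInDoubleDual ℝ E ((toWeakSpace ℝ E).symm a)‖ ≤ r := by
      rw [show inclusionInDoubleDual ℝ E ((toWeakSpace ℝ E).symm a)
        = inclusionInDoubleDualLi ℝ ((toWeakSpace ℝ E).symm a) from rfl,
        (inclusionInDoubleDualLi ℝ).norm_map]
      exact hr a ha
    simp only [Set.mem_preimage, mem_closedBall_zero_iff (E := Dual ℝ (Dual ℝ E))]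
    exact this
  have hKcpt : IsCompact (closure (JW '' A)) :=
    (WeakDual.isCompact_closedBall (𝕜 := ℝ) (0 : Dual ℝ (Dual ℝ E)) r).of_isClosed_subset
      isClosed_closure
      (closure_minimal hball (WeakDual.isClosed_closedBall (0 : Dual ℝ (Dual ℝ E)) r))
  have hKrange : closure (JW '' A) ⊆ Set.range (JW (E := E)) :=
    fun x hx => mem_range_JW h x hx
  have hpre : IsCompact (JW ⁻¹' closure (JW '' A)) :=
    (JW_inducing.isCompact_preimage_iff hKrange).2 hKcpt
  refine hpre.of_isClosed_subset isClosed_closure (closure_minimal ?_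
    (IsClosed.preimage JW_cont isClosed_closure))
  exact fun a ha => subset_closure ⟨a, ha, rfl⟩

theorem compact_closure_relSeqCompact {A : Set (WeakSpace ℝ E)} (h : IsCompact (closure A)) :
    RelSeqCompact A := by
  intro u hu
  classical
  set aE : ℕ → E := fun n => (toWeakSpace ℝ E).symm (u n) with haE
  set S : Submodule ℝ E := (Submodule.span ℝ (Set.range aE)).topologicalClosure with hS
  -- separability and a norming sequence of functionals
  have hsep : TopologicalSpace.IsSeparable (S : Set E) := by
    rw [Submodule.topologicalClosure_coe]
    exact ((Set.countable_range aE).isSeparable.span).closure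
  obtain ⟨c, hc_count, hc_sub⟩ := hsep
  obtain ⟨d, hd⟩ := (hc_count.insert 0).exists_eq_range (Set.insert_nonempty _ _)
  have hSd : (S : Set E) ⊆ closure (Set.range d) := by
    rw [← hd]
    exact hc_sub.trans (closure_mono (Set.subset_insert _ _))
  have hF : ∀ j : ℕ, ∃ f : Dual ℝ E, ‖f‖ ≤ 1 ∧ f (d j) = ‖d j‖ := by
    intro j
    rcases eq_or_ne (d j) 0 with hj | hj
    · exact ⟨0, by simp, by simp [hj]⟩
    · obtain ⟨f, hf1, hf2⟩ := exists_dual_vector ℝ (d j) (norm_ne_zero_iff.2 hj)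
      exact ⟨f, hf1.le, hf2⟩
  choose F hF1 hF2 using hF
  -- the functionals F separate the points of S
  have hkey : ∀ s ∈ S, (∀ j, F j s = 0) → s = 0 := by
    intro s hsS hs0
    by_contra hs
    have hpos : 0 < ‖s‖ := norm_pos_iff.2 hs
    obtain ⟨y, ⟨j, rfl⟩, hyd⟩ := Metric.mem_closure_iff.1 (hSd hsS) (‖s‖/3) (by linarith)
    have hdj : ‖s‖ - ‖s‖/3 ≤ ‖d j‖ := by
      have := norm_sub_norm_le s (d j)
      have hd' : ‖s - d j‖ < ‖s‖/3 := by rwa [← dist_eq_norm]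
      linarith
    have h1 : F j s = F j (s - d j) + ‖d j‖ := by
      rw [map_sub]; rw [hF2 j]; ring
    have h2 : ‖F j (s - d j)‖ ≤ ‖s - d j‖ := by
      calc ‖F j (s - d j)‖ ≤ ‖F j‖ * ‖s - d j‖ := ContinuousLinearMap.le_opNorm _ _
        _ ≤ 1 * ‖s - d j‖ := mul_le_mul_of_nonneg_right (hF1 j) (norm_nonneg _)
        _ = ‖s - d j‖ := one_mul _
    have hd' : ‖s - d j‖ < ‖s‖/3 := by rwa [← dist_eq_norm]
    have h3 : 0 < F j s := by
      have := abs_le.1 ((Real.norm_eq_abs _ ▸ h2) : |F j (s - d j)| ≤ ‖s - d j‖)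
      rw [h1]
      linarith
    rw [hs0 j] at h3
    exact lt_irrefl _ h3
  -- the weak closure of the sequence is contained in S
  have hSclosed : IsClosed {x : WeakSpace ℝ E | (toWeakSpace ℝ E).symm x ∈ S} := by
    rw [← isOpen_compl_iff]
    rw [isOpen_iff_mem_nhds]
    intro x hx
    obtain ⟨f, hf0, hfx⟩ := exists_dual_annihilator
      (Submodule.span ℝ (Set.range aE)).isClosed_topologicalClosure hx
    have hopen : IsOpen {y : WeakSpace ℝ E | f ((toWeakSpace ℝ E).symm y) ≠ 0} :=
      IsOpen.preimage (weak_eval_continuous f) isOpen_compl_singleton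
    refine Filter.mem_of_superset (hopen.mem_nhds hfx) ?_
    intro y hy hyS
    exact hy (hf0 _ hyS)
  set K0 : Set (WeakSpace ℝ E) := closure (Set.range u) with hK0
  have hK0cpt : IsCompact K0 :=
    h.of_isClosed_subset isClosed_closure
      (closure_mono (Set.range_subset_iff.2 hu))
  have hK0S : ∀ x ∈ K0, (toWeakSpace ℝ E).symm x ∈ S := by
    have : K0 ⊆ {x : WeakSpace ℝ E | (toWeakSpace ℝ E).symm x ∈ S} := by
      apply closure_minimal _ hSclosed
      rintro _ ⟨n, rfl⟩
      exact (Submodule.span ℝ (Set.range aE)).le_topologicalClosure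
        (Submodule.subset_span ⟨n, rfl⟩)
    exact this
  -- K0 as a compact metrizable space
  haveI : CompactSpace K0 := isCompact_iff_compactSpace.1 hK0cpt
  set Ψ : K0 → (ℕ → ℝ) := fun x j => F j ((toWeakSpace ℝ E).symm x.1) with hΨ
  have hΨcont : Continuous Ψ := by
    apply continuous_pi
    intro j
    exact (weak_eval_continuous (F j)).comp continuous_subtype_val
  have hΨinj : Function.Injective Ψ := by
    intro x y hxy
    have hdiff : ∀ j, F j ((toWeakSpace ℝ E).symm x.1 - (toWeakSpace ℝ E).symm y.1) = 0 := by
      intro j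
      rw [map_sub]
      have := congrFun hxy j
      simp only [hΨ] at this
      rw [this]; ring
    have hmem : (toWeakSpace ℝ E).symm x.1 - (toWeakSpace ℝ E).symm y.1 ∈ S :=
      S.sub_mem (hK0S _ x.2) (hK0S _ y.2)
    have := hkey _ hmem hdiff
    have hxy' : (toWeakSpace ℝ E).symm x.1 = (toWeakSpace ℝ E).symm y.1 := sub_eq_zero.1 this
    exact Subtype.ext ((toWeakSpace ℝ E).symm.injective hxy')
  have hemb : IsEmbedding Ψ := (hΨcont.isClosedEmbedding hΨinj).isEmbedding
  haveI : TopologicalSpace.MetrizableSpace K0 := hemb.metrizableSpace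
  -- extract a convergent subsequence
  set v : ℕ → K0 := fun n => ⟨u n, subset_closure ⟨n, rfl⟩⟩ with hv
  obtain ⟨x, -, φ, hφ, hconv⟩ := isCompact_univ.tendsto_subseq (x := v) (fun n => Set.mem_univ _)
  refine ⟨x.1, φ, hφ, ?_⟩
  have : Tendsto (Subtype.val ∘ (v ∘ φ)) atTop (𝓝 x.1) :=
    (continuous_subtype_val.tendsto x).comp hconv
  exact this

end EberleinAux

/-- Eberlein–Šmulian: for a subset A of a Banach space E with its weak topology,
relative compactness, relative sequential compactness and relative countable
compactness coincide. -/
theorem eberlein_smulian (E : Type u) [NormedAddCommGroup E] [NormedSpace ℝ E]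
    [CompleteSpace E] (A : Set (WeakSpace ℝ E)) :
    List.TFAE [IsCompact (closure A), RelSeqCompact A, RelCountablyCompact A] := by
  tfae_have 1 → 2 := fun h => compact_closure_relSeqCompact h
  tfae_have 2 → 3 := by
    intro h u hu
    obtain ⟨x, φ, hφ, hconv⟩ := h u hu
    exact ⟨x, MapClusterPt.of_comp hφ.tendsto_atTop hconv.mapClusterPt⟩
  tfae_have 3 → 1 := fun h => rcc_isCompact_closure h
  tfae_finish
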